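/- arXiv:2112.09364 — 2 statements merged into one kernel-verified Lean document; each statement's English description precedes it below -/
import Mathlib

section
/- Let σ ∈ (0,2], let k be a kernel of order σ, and let Ω ⊆ ℝ^N be open. If u ∈ 𝒱^k_loc(Ω) and φ ∈ C_c^∞(Ω), then the function (x,y) ↦ (u(x)−u(y))(φ(x)−φ(y)) k(x,y) is absolutely integrable over ℝ^N × ℝ^N; in particular b_k(u,φ) := (1/2)∫∫ (u(x)−u(y))(φ(x)−φ(y)) k(x,y) dx dy is well-defined and finite. -/
open MeasureTheory ENNReal Metric Set Filter

noncomputable section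

abbrev Euc (N : ℕ) := EuclideanSpace ℝ (Fin N)

/-- A kernel of order `σ`. -/
def IsKernel (N : ℕ) (σ : ℝ) (k : Euc N → Euc N → ℝ) : Prop :=
  Measurable (fun p : Euc N × Euc N => k p.1 p.2) ∧
  (∀ x y, 0 ≤ k x y) ∧ (∀ x y, k x y = k y x) ∧
  ∃ C : ℝ, ∀ x, (∫⁻ y, ENNReal.ofReal (min 1 (‖x - y‖ ^ σ) * k x y)) ≤ ENNReal.ofReal C

/-- The quadratic form `b_{k,Ω}(u)` (valued in `[0,∞]`). -/
def quadForm {N : ℕ} (k : Euc N → Euc N → ℝ) (Ω : Set (Euc N)) (u : Euc N → ℝ) : ℝ≥0∞ :=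
  (1 / 2) * ∫⁻ x in Ω, ∫⁻ y in Ω, ENNReal.ofReal ((u x - u y) ^ 2 * k x y)

/-- The bilinear form `b_{k,Ω}(u,v)`. -/
def bForm {N : ℕ} (k : Euc N → Euc N → ℝ) (Ω : Set (Euc N)) (u v : Euc N → ℝ) : ℝ :=
  (1 / 2) * ∫ x in Ω, ∫ y in Ω, (u x - u y) * (v x - v y) * k x y

/-- The symmetric lower bound `j` of the kernel `k`. -/
def symLB {N : ℕ} (k : Euc N → Euc N → ℝ) (z : Euc N) : ℝ :=
  essInf (fun x => min (k x (x + z)) (k x (x - z))) volume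

/-- `u|_Ω ∈ D^k(Ω)`. -/
def MemDk {N : ℕ} (k : Euc N → Euc N → ℝ) (Ω : Set (Euc N)) (u : Euc N → ℝ) : Prop :=
  Measurable u ∧ MemLp u 2 (volume.restrict Ω) ∧ quadForm k Ω u < ⊤

/-- `u ∈ 𝒱^k(Ω)`. -/
def MemVk {N : ℕ} (k : Euc N → Euc N → ℝ) (Ω : Set (Euc N)) (u : Euc N → ℝ) : Prop :=
  MemDk k Ω u ∧
  ∀ r > (0:ℝ), ∃ C : ℝ, ∀ x, (∫⁻ y in (Metric.ball x r)ᶜ, ENNReal.ofReal (|u y| * k x y)) ≤ ENNReal.ofReal C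

/-- `u ∈ 𝒱^k_loc(Ω)`. -/
def MemVkLoc {N : ℕ} (k : Euc N → Euc N → ℝ) (Ω : Set (Euc N)) (u : Euc N → ℝ) : Prop :=
  Measurable u ∧
  (∀ Ω' : Set (Euc N), IsOpen Ω' → IsCompact (closure Ω') → closure Ω' ⊆ Ω → MemDk k Ω' u) ∧
  ∀ r > (0:ℝ), ∃ C : ℝ, ∀ x, (∫⁻ y in (Metric.ball x r)ᶜ, ENNReal.ofReal (|u y| * k x y)) ≤ ENNReal.ofReal C

/-- `u ∈ 𝒟^k(Ω)`. -/
def MemDkZero {N : ℕ} (k : Euc N → Euc N → ℝ) (Ω : Set (Euc N)) (u : Euc N → ℝ) : Prop :=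
  Measurable u ∧ MemLp u 2 volume ∧ quadForm k Set.univ u < ⊤ ∧ ∀ᵐ x ∂(volume : Measure (Euc N)), x ∉ Ω → u x = 0

/-- `φ ∈ C_c^∞(Ω)`. -/
def IsTestFun {N : ℕ} (Ω : Set (Euc N)) (φ : Euc N → ℝ) : Prop :=
  ContDiff ℝ (⊤ : ℕ∞) φ ∧ HasCompactSupport φ ∧ tsupport φ ⊆ Ω

/-- `c ∈ L^∞_loc(Ω)`. -/
def MemLinftyLoc {N : ℕ} (Ω : Set (Euc N)) (c : Euc N → ℝ) : Prop :=
  ∀ K ⊆ Ω, IsCompact K → ∃ M : ℝ, ∀ᵐ x ∂(volume.restrict K), |c x| ≤ M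

/-- `κ_{k,Ω}(x)`. -/
def kappa {N : ℕ} (k : Euc N → Euc N → ℝ) (Ω : Set (Euc N)) (x : Euc N) : ℝ≥0∞ :=
  ∫⁻ y in Ωᶜ, ENNReal.ofReal (k x y)

/-- `Ω` has Lipschitz boundary. -/
def HasLipschitzBoundary (N : ℕ) (Ω : Set (Euc N)) : Prop :=
  ∀ p ∈ frontier Ω, ∃ U ∈ nhds p, ∃ e : Euc N ≃ᵢ Euc N, ∃ γ : Euc N → ℝ, ∃ L : NNReal,
    LipschitzWith L γ ∧
    (∀ x y : Euc N, (∀ i : Fin N, (i : ℕ) + 1 < N → x i = y i) → γ x = γ y) ∧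
    Ω ∩ U = {x ∈ U | ∀ i : Fin N, (i : ℕ) + 1 = N → γ (e x) < e x i}

private lemma minpow_aux {σ : ℝ} (hσ0 : 0 < σ) (hσ2 : σ ≤ 2) {t : ℝ} (ht : 0 ≤ t) :
    (min 1 t) ^ 2 ≤ min 1 (t ^ σ) := by
  rcases le_or_gt t 1 with h | h
  · rw [min_eq_right h]
    rcases eq_or_lt_of_le ht with rfl | ht0
    · rw [Real.zero_rpow hσ0.ne']; simp
    · have h2 : t ^ σ ≤ 1 := Real.rpow_le_one ht h hσ0.le
      rw [min_eq_right h2]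
      calc t ^ 2 = t ^ (2:ℝ) := by
            rw [show ((2:ℝ)) = ((2:ℕ):ℝ) by norm_num, Real.rpow_natCast]
        _ ≤ t ^ σ := Real.rpow_le_rpow_of_exponent_ge ht0 h hσ2
  · rw [min_eq_left h.le, min_eq_left (Real.one_le_rpow h.le hσ0.le)]; norm_num

/-- `b_k(u,φ)` is well-defined for `u ∈ 𝒱^k_loc(Ω)` and `φ ∈ C_c^∞(Ω)`. -/
theorem bForm_well_defined
    {N : ℕ} (hN : 0 < N) {σ : ℝ} (hσ0 : 0 < σ) (hσ2 : σ ≤ 2)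
    (k : Euc N → Euc N → ℝ) (hk : IsKernel N σ k)
    (Ω : Set (Euc N)) (hΩo : IsOpen Ω)
    (u : Euc N → ℝ) (hu : MemVkLoc k Ω u)
    (φ : Euc N → ℝ) (hφ : IsTestFun Ω φ) :
    Integrable (fun p : Euc N × Euc N => (u p.1 - u p.2) * (φ p.1 - φ p.2) * k p.1 p.2)
      ((volume : Measure (Euc N)).prod volume) := by
  classical
  obtain ⟨hkm, hk0, hks, Ck, hCk⟩ := hk
  obtain ⟨hum, huD, hutail⟩ := hu
  obtain ⟨hφs, hφc, hφΩ⟩ := hφ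
  have hφcont : Continuous φ := hφs.continuous
  have hKc : IsCompact (tsupport φ) := hφc
  have hKm : MeasurableSet (tsupport φ) := (isClosed_tsupport φ).measurableSet
  -- bound on φ
  obtain ⟨M, hM⟩ := hφc.exists_bound_of_continuous hφcont
  have hM0 : 0 ≤ M := le_trans (norm_nonneg _) (hM 0)
  -- Lipschitz bound on φ
  obtain ⟨Lc, hLc⟩ := ContDiff.lipschitzWith_of_hasCompactSupport hφc hφs
    (by simp)
  set C₀ : ℝ := max (Lc : ℝ) (2 * M) with hC₀def
  have hC₀0 : 0 ≤ C₀ := le_trans (by positivity) (le_max_right _ _)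
  have hφdiff : ∀ x y : Euc N, |φ x - φ y| ≤ C₀ * min 1 ‖x - y‖ := by
    intro x y
    rcases le_total ‖x - y‖ 1 with h | h
    · rw [min_eq_right h]
      calc |φ x - φ y| ≤ (Lc : ℝ) * ‖x - y‖ := by
            have h1 := hLc.dist_le_mul x y
            rwa [Real.dist_eq, dist_eq_norm] at h1
        _ ≤ C₀ * ‖x - y‖ := by
            apply mul_le_mul_of_nonneg_right (le_max_left _ _) (norm_nonneg _)
    · rw [min_eq_left h]
      have h1 : |φ x - φ y| ≤ |φ x| + |φ y| := abs_sub _ _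
      have hx' := hM x; have hy' := hM y
      rw [Real.norm_eq_abs] at hx' hy'
      have h2 : 2 * M ≤ C₀ := le_max_right _ _
      rw [mul_one]; linarith
  -- intermediate domain Ω'
  obtain ⟨Lset, hLsetc, hKL, hLΩ⟩ := exists_compact_between hφc hΩo hφΩ
  set Ω' : Set (Euc N) := interior Lset with hΩ'def
  have hΩ'o : IsOpen Ω' := isOpen_interior
  have hKΩ' : tsupport φ ⊆ Ω' := hKL
  have hclosΩ' : closure Ω' ⊆ Lset := closure_minimal interior_subset hLsetc.isClosed
  have hΩ'm : MeasurableSet Ω' := hΩ'o.measurableSet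
  have hΩ'vol : volume Ω' < ⊤ := (hLsetc.isBounded.subset interior_subset).measure_lt_top
  obtain ⟨-, huL2, huQ⟩ := huD Ω' hΩ'o
    (hLsetc.of_isClosed_subset isClosed_closure hclosΩ') (hclosΩ'.trans hLΩ)
  obtain ⟨δ, hδ0, hδsub⟩ := IsCompact.exists_thickening_subset_open hKc hΩ'o hKΩ'
  obtain ⟨Cδ, hCδ⟩ := hutail δ hδ0
  have hdist : ∀ x ∈ tsupport φ, ∀ y, y ∉ Ω' → δ ≤ dist x y := by
    intro x hx y hy
    by_contra h
    push_neg at h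
    exact hy (hδsub (Metric.mem_thickening_iff.2 ⟨x, hx, by rwa [dist_comm]⟩))
  -- integrability of u on tsupport φ
  haveI : IsFiniteMeasure (volume.restrict Ω') :=
    ⟨by rwa [Measure.restrict_apply_univ]⟩
  have huI : Integrable u (volume.restrict Ω') :=
    memLp_one_iff_integrable.mp (huL2.mono_exponent (by norm_num))
  have huK : ∫⁻ x in tsupport φ, ENNReal.ofReal |u x| < ⊤ := by
    refine lt_of_le_of_lt (lintegral_mono_set hKΩ') ?_
    have heq : ∀ x : Euc N, ENNReal.ofReal |u x| = (‖u x‖₊ : ℝ≥0∞) := fun x => by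
      rw [← enorm_eq_nnnorm, ← ofReal_norm, Real.norm_eq_abs]
    calc ∫⁻ x in Ω', ENNReal.ofReal |u x| = ∫⁻ x in Ω', (‖u x‖₊ : ℝ≥0∞) :=
          lintegral_congr fun x => heq x
      _ < ⊤ := huI.2
  -- measurability facts
  have hkx : ∀ x : Euc N, Measurable fun y => k x y :=
    fun x => hkm.comp (measurable_const.prodMk measurable_id)
  have hminmeas : ∀ x : Euc N, Measurable fun y : Euc N =>
      ENNReal.ofReal (min 1 (‖x - y‖ ^ σ) * k x y) := fun x =>
    ((measurable_const.min
      ((Real.continuous_rpow_const hσ0.le).comp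
        ((continuous_const.sub continuous_id).norm)).measurable).mul (hkx x)).ennreal_ofReal
  set f : Euc N × Euc N → ℝ :=
    fun p => (u p.1 - u p.2) * (φ p.1 - φ p.2) * k p.1 p.2 with hfdef
  have hfm : Measurable f :=
    (((hum.comp measurable_fst).sub (hum.comp measurable_snd)).mul
      ((hφcont.measurable.comp measurable_fst).sub
        (hφcont.measurable.comp measurable_snd))).mul hkm
  -- the four dominating functions
  set A : Euc N × Euc N → ℝ≥0∞ :=
    fun p => ENNReal.ofReal ((u p.1 - u p.2) ^ 2 * k p.1 p.2) with hA
  set B : Euc N × Euc N → ℝ≥0∞ :=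
    fun p => ENNReal.ofReal ((φ p.1 - φ p.2) ^ 2 * k p.1 p.2) with hB
  set D : Euc N × Euc N → ℝ≥0∞ :=
    fun p => ENNReal.ofReal (2 * M * (|u p.1| + |u p.2|) * k p.1 p.2) with hD
  have hAm : Measurable A := ENNReal.measurable_ofReal.comp
    ((((hum.comp measurable_fst).sub (hum.comp measurable_snd)).pow_const 2).mul hkm)
  have hBm : Measurable B := ENNReal.measurable_ofReal.comp
    ((((hφcont.measurable.comp measurable_fst).sub
      (hφcont.measurable.comp measurable_snd)).pow_const 2).mul hkm)
  have hDm : Measurable D := ENNReal.measurable_ofReal.comp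
    ((measurable_const.mul
      (((hum.comp measurable_fst).abs).add ((hum.comp measurable_snd).abs))).mul hkm)
  set g1a : Euc N × Euc N → ℝ≥0∞ := (Ω' ×ˢ Ω').indicator A with hg1a
  set g1b : Euc N × Euc N → ℝ≥0∞ := (Ω' ×ˢ Ω').indicator B with hg1b
  set g2 : Euc N × Euc N → ℝ≥0∞ := (tsupport φ ×ˢ Ω'ᶜ).indicator D with hg2
  set g3 : Euc N × Euc N → ℝ≥0∞ := (Ω'ᶜ ×ˢ tsupport φ).indicator D with hg3
  have hg1am : Measurable g1a := hAm.indicator (hΩ'm.prod hΩ'm)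
  have hg1bm : Measurable g1b := hBm.indicator (hΩ'm.prod hΩ'm)
  have hg2m : Measurable g2 := hDm.indicator (hKm.prod hΩ'm.compl)
  have hg3m : Measurable g3 := hDm.indicator (hΩ'm.compl.prod hKm)
  -- pointwise bound
  have hpt : ∀ p : Euc N × Euc N,
      (‖f p‖₊ : ℝ≥0∞) ≤ g1a p + g1b p + g2 p + g3 p := by
    rintro ⟨x, y⟩
    have hfabs : (‖f (x, y)‖₊ : ℝ≥0∞) =
        ENNReal.ofReal (|u x - u y| * |φ x - φ y| * k x y) := by
      rw [← enorm_eq_nnnorm, ← ofReal_norm, Real.norm_eq_abs]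
      congr 1
      simp only [hfdef]
      rw [abs_mul, abs_mul, abs_of_nonneg (hk0 x y)]
    rw [hfabs]
    by_cases hxy : x ∈ Ω' ∧ y ∈ Ω'
    · refine le_trans ?_ (le_trans le_self_add le_self_add)
      have hmem : (x, y) ∈ Ω' ×ˢ Ω' := ⟨hxy.1, hxy.2⟩
      rw [hg1a, hg1b, Set.indicator_of_mem hmem, Set.indicator_of_mem hmem, hA, hB]
      simp only
      rw [← ENNReal.ofReal_add (mul_nonneg (sq_nonneg _) (hk0 x y))
        (mul_nonneg (sq_nonneg _) (hk0 x y))]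
      apply ENNReal.ofReal_le_ofReal
      have h1 : |u x - u y| * |φ x - φ y| ≤ (u x - u y) ^ 2 + (φ x - φ y) ^ 2 := by
        nlinarith [sq_abs (u x - u y), sq_abs (φ x - φ y),
          sq_nonneg (|u x - u y| - |φ x - φ y|), abs_nonneg (u x - u y),
          abs_nonneg (φ x - φ y), mul_nonneg (abs_nonneg (u x - u y)) (abs_nonneg (φ x - φ y))]
      calc |u x - u y| * |φ x - φ y| * k x y
          ≤ ((u x - u y) ^ 2 + (φ x - φ y) ^ 2) * k x y :=
            mul_le_mul_of_nonneg_right h1 (hk0 x y)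
        _ = (u x - u y) ^ 2 * k x y + (φ x - φ y) ^ 2 * k x y := by ring
    · have hDbound : ∀ a b : Euc N,
          |u a - u b| * |φ a - φ b| * k a b ≤ 2 * M * (|u a| + |u b|) * k a b := by
        intro a b
        have h1 : |u a - u b| ≤ |u a| + |u b| := abs_sub _ _
        have h2 : |φ a - φ b| ≤ 2 * M := by
          have h3 : |φ a - φ b| ≤ |φ a| + |φ b| := abs_sub _ _
          have ha' := hM a; have hb' := hM b
          rw [Real.norm_eq_abs] at ha' hb'
          linarith
        calc |u a - u b| * |φ a - φ b| * k a b
            ≤ (|u a| + |u b|) * (2 * M) * k a b :=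
              mul_le_mul_of_nonneg_right
                (mul_le_mul h1 h2 (abs_nonneg _) (by positivity)) (hk0 a b)
          _ = 2 * M * (|u a| + |u b|) * k a b := by ring
      rcases Classical.em (y ∈ Ω') with hy | hy
      · have hx : x ∉ Ω' := fun hx => hxy ⟨hx, hy⟩
        have hφx : φ x = 0 := image_eq_zero_of_notMem_tsupport (fun hxK => hx (hKΩ' hxK))
        rcases Classical.em (y ∈ tsupport φ) with hyK | hyK
        · refine le_trans ?_ le_add_self
          rw [hg3, Set.indicator_of_mem (show (x, y) ∈ Ω'ᶜ ×ˢ tsupport φ from ⟨hx, hyK⟩), hD]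
          exact ENNReal.ofReal_le_ofReal (hDbound x y)
        · have hφy : φ y = 0 := image_eq_zero_of_notMem_tsupport hyK
          simp [hφx, hφy]
      · rcases Classical.em (x ∈ tsupport φ) with hxK | hxK
        · refine le_trans ?_ (le_trans le_add_self le_self_add)
          rw [hg2, Set.indicator_of_mem
              (show (x, y) ∈ tsupport φ ×ˢ Ω'ᶜ from ⟨hxK, hy⟩), hD]
          exact ENNReal.ofReal_le_ofReal (hDbound x y)
        · have hφx : φ x = 0 := image_eq_zero_of_notMem_tsupport hxK
          have hφy : φ y = 0 := image_eq_zero_of_notMem_tsupport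
            (fun hyK => hy (hKΩ' hyK))
          simp [hφx, hφy]
  -- finiteness of the four integrals
  have hG1a : ∫⁻ p, g1a p ∂((volume : Measure (Euc N)).prod volume) < ⊤ := by
    rw [hg1a, lintegral_indicator (hΩ'm.prod hΩ'm), ← Measure.prod_restrict,
        lintegral_prod _ hAm.aemeasurable]
    have h2 := huQ
    rw [quadForm] at h2
    by_contra h
    push_neg at h
    rw [top_le_iff.mp h, ENNReal.mul_top (by norm_num)] at h2
    exact lt_irrefl _ h2
  have hG1b : ∫⁻ p, g1b p ∂((volume : Measure (Euc N)).prod volume) < ⊤ := by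
    rw [hg1b, lintegral_indicator (hΩ'm.prod hΩ'm), ← Measure.prod_restrict,
        lintegral_prod _ hBm.aemeasurable]
    have hbound : ∀ x : Euc N, (∫⁻ y in Ω', B (x, y)) ≤
        ENNReal.ofReal (C₀ ^ 2) * ENNReal.ofReal Ck := by
      intro x
      refine le_trans (le_trans (lintegral_mono_set (subset_univ Ω'))
        (le_of_eq (by rw [Measure.restrict_univ]))) ?_
      calc ∫⁻ y, B (x, y)
          ≤ ∫⁻ y, ENNReal.ofReal (C₀ ^ 2) *
              ENNReal.ofReal (min 1 (‖x - y‖ ^ σ) * k x y) := by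
            apply lintegral_mono
            intro y
            rw [hB]; simp only
            rw [← ENNReal.ofReal_mul (by positivity)]
            apply ENNReal.ofReal_le_ofReal
            have h3 : (φ x - φ y) ^ 2 ≤ (C₀ * min 1 ‖x - y‖) ^ 2 := by
              rw [← sq_abs (φ x - φ y)]
              apply pow_le_pow_left₀ (abs_nonneg _) (hφdiff x y)
            have h4 : (min 1 ‖x - y‖) ^ 2 ≤ min 1 (‖x - y‖ ^ σ) :=
              minpow_aux hσ0 hσ2 (norm_nonneg _)
            have h5 : (φ x - φ y) ^ 2 ≤ C₀ ^ 2 * min 1 (‖x - y‖ ^ σ) := by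
              rw [mul_pow] at h3
              exact h3.trans (mul_le_mul_of_nonneg_left h4 (by positivity))
            calc (φ x - φ y) ^ 2 * k x y
                ≤ (C₀ ^ 2 * min 1 (‖x - y‖ ^ σ)) * k x y :=
                  mul_le_mul_of_nonneg_right h5 (hk0 x y)
              _ = C₀ ^ 2 * (min 1 (‖x - y‖ ^ σ) * k x y) := by ring
        _ = ENNReal.ofReal (C₀ ^ 2) *
              ∫⁻ y, ENNReal.ofReal (min 1 (‖x - y‖ ^ σ) * k x y) :=
            lintegral_const_mul _ (hminmeas x)
        _ ≤ ENNReal.ofReal (C₀ ^ 2) * ENNReal.ofReal Ck :=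
            mul_le_mul_right (hCk x) _
    calc ∫⁻ x in Ω', ∫⁻ y in Ω', B (x, y)
        ≤ ∫⁻ _x in Ω', ENNReal.ofReal (C₀ ^ 2) * ENNReal.ofReal Ck :=
          lintegral_mono fun x => hbound x
      _ = ENNReal.ofReal (C₀ ^ 2) * ENNReal.ofReal Ck * volume Ω' :=
          setLIntegral_const _ _
      _ < ⊤ := ENNReal.mul_lt_top
          (ENNReal.mul_lt_top ENNReal.ofReal_lt_top ENNReal.ofReal_lt_top) hΩ'vol
  have hG2 : ∫⁻ p, g2 p ∂((volume : Measure (Euc N)).prod volume) < ⊤ := by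
    rw [hg2, lintegral_indicator (hKm.prod hΩ'm.compl), ← Measure.prod_restrict,
        lintegral_prod _ hDm.aemeasurable]
    set m : ℝ := min 1 (δ ^ σ) with hm
    have hm0 : 0 < m := lt_min one_pos (Real.rpow_pos_of_pos hδ0 σ)
    have hCk' : ∀ x : Euc N,
        (∫⁻ y in (Metric.ball x δ)ᶜ, ENNReal.ofReal (k x y)) ≤
          ENNReal.ofReal (Ck / m) := by
      intro x
      calc ∫⁻ y in (Metric.ball x δ)ᶜ, ENNReal.ofReal (k x y)
          ≤ ∫⁻ y in (Metric.ball x δ)ᶜ, ENNReal.ofReal (1 / m) *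
              ENNReal.ofReal (min 1 (‖x - y‖ ^ σ) * k x y) := by
            apply setLIntegral_mono (measurable_const.mul (hminmeas x))
            intro y hy
            show ENNReal.ofReal (k x y) ≤ ENNReal.ofReal (1 / m) * ENNReal.ofReal (min 1 (‖x - y‖ ^ σ) * k x y)
            rw [← ENNReal.ofReal_mul (by positivity)]
            apply ENNReal.ofReal_le_ofReal
            have hdy : δ ≤ ‖x - y‖ := by
              have h6 : y ∉ Metric.ball x δ := hy
              rw [Metric.mem_ball, not_lt, dist_comm] at h6
              rwa [← dist_eq_norm]
            have h5 : m ≤ min 1 (‖x - y‖ ^ σ) :=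
              min_le_min le_rfl (Real.rpow_le_rpow hδ0.le hdy hσ0.le)
            calc k x y = (m * k x y) * m⁻¹ := by field_simp
              _ ≤ (min 1 (‖x - y‖ ^ σ) * k x y) * m⁻¹ :=
                  mul_le_mul_of_nonneg_right
                    (mul_le_mul_of_nonneg_right h5 (hk0 x y)) (by positivity)
              _ = 1 / m * (min 1 (‖x - y‖ ^ σ) * k x y) := by ring
        _ ≤ ENNReal.ofReal (1 / m) *
              ∫⁻ y, ENNReal.ofReal (min 1 (‖x - y‖ ^ σ) * k x y) := by
            rw [lintegral_const_mul _ (hminmeas x)]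
            refine mul_le_mul_right ?_ _
            exact le_trans (lintegral_mono_set (subset_univ _))
              (le_of_eq (by rw [Measure.restrict_univ]))
        _ ≤ ENNReal.ofReal (1 / m) * ENNReal.ofReal Ck :=
            mul_le_mul_right (hCk x) _
        _ = ENNReal.ofReal (Ck / m) := by
            rw [← ENNReal.ofReal_mul (by positivity)]
            congr 1; ring
    have hinner : ∀ x ∈ tsupport φ, (∫⁻ y in Ω'ᶜ, D (x, y)) ≤
        ENNReal.ofReal (2 * M) * (ENNReal.ofReal |u x| * ENNReal.ofReal (Ck / m)
          + ENNReal.ofReal Cδ) := by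
      intro x hx
      have hsub : Ω'ᶜ ⊆ (Metric.ball x δ)ᶜ := by
        intro y hy
        rw [mem_compl_iff, Metric.mem_ball, not_lt, dist_comm]
        exact hdist x hx y hy
      calc ∫⁻ y in Ω'ᶜ, D (x, y)
          ≤ ∫⁻ y in (Metric.ball x δ)ᶜ, D (x, y) := lintegral_mono_set hsub
        _ = ∫⁻ y in (Metric.ball x δ)ᶜ, ENNReal.ofReal (2 * M) *
              (ENNReal.ofReal |u x| * ENNReal.ofReal (k x y)
                + ENNReal.ofReal (|u y| * k x y)) := by
            apply lintegral_congr
            intro y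
            rw [hD]; simp only
            rw [← ENNReal.ofReal_mul (abs_nonneg _),
              ← ENNReal.ofReal_add (mul_nonneg (abs_nonneg _) (hk0 x y))
                (mul_nonneg (abs_nonneg _) (hk0 x y)),
              ← ENNReal.ofReal_mul (by positivity)]
            congr 1; ring
        _ = ENNReal.ofReal (2 * M) *
              (ENNReal.ofReal |u x| * (∫⁻ y in (Metric.ball x δ)ᶜ, ENNReal.ofReal (k x y))
                + ∫⁻ y in (Metric.ball x δ)ᶜ, ENNReal.ofReal (|u y| * k x y)) := by
            rw [lintegral_const_mul _
              (show Measurable (fun y => ENNReal.ofReal |u x| * ENNReal.ofReal (k x y) + ENNReal.ofReal (|u y| * k x y)) from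
              ((measurable_const.mul ((hkx x).ennreal_ofReal)).add
                (((hum.abs).mul (hkx x)).ennreal_ofReal))),
              lintegral_add_left
                (show Measurable (fun y => ENNReal.ofReal |u x| * ENNReal.ofReal (k x y)) from
                (measurable_const.mul ((hkx x).ennreal_ofReal))),
              lintegral_const_mul _ ((hkx x).ennreal_ofReal)]
        _ ≤ ENNReal.ofReal (2 * M) *
              (ENNReal.ofReal |u x| * ENNReal.ofReal (Ck / m) + ENNReal.ofReal Cδ) := by
            exact mul_le_mul_right
              (add_le_add (mul_le_mul_right (hCk' x) _) (hCδ x)) _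
    calc ∫⁻ x in tsupport φ, ∫⁻ y in Ω'ᶜ, D (x, y)
        ≤ ∫⁻ x in tsupport φ, ENNReal.ofReal (2 * M) *
            (ENNReal.ofReal |u x| * ENNReal.ofReal (Ck / m) + ENNReal.ofReal Cδ) := by
          apply setLIntegral_mono
            (measurable_const.mul
              ((hum.abs.ennreal_ofReal.mul measurable_const).add
                measurable_const))
          exact hinner
      _ = ENNReal.ofReal (2 * M) *
            ((∫⁻ x in tsupport φ, ENNReal.ofReal |u x|) * ENNReal.ofReal (Ck / m)
              + ENNReal.ofReal Cδ * volume (tsupport φ)) := by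
          rw [lintegral_const_mul _
              (show Measurable (fun x => ENNReal.ofReal |u x| * ENNReal.ofReal (Ck / m) + ENNReal.ofReal Cδ) from
              ((hum.abs.ennreal_ofReal.mul measurable_const).add
                measurable_const)),
            lintegral_add_right _ measurable_const,
            lintegral_mul_const _ hum.abs.ennreal_ofReal,
            setLIntegral_const]
      _ < ⊤ := by
          apply ENNReal.mul_lt_top ENNReal.ofReal_lt_top
          apply ENNReal.add_lt_top.2
          constructor
          · exact ENNReal.mul_lt_top huK ENNReal.ofReal_lt_top
          · exact ENNReal.mul_lt_top ENNReal.ofReal_lt_top hKc.measure_lt_top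
  have hswap : ∀ z : Euc N × Euc N, g3 z.swap = g2 z := by
    rintro ⟨x, y⟩
    rw [hg2, hg3]
    by_cases h : x ∈ tsupport φ ∧ y ∈ Ω'ᶜ
    · rw [Set.indicator_of_mem
        (show (Prod.swap (x, y)) ∈ Ω'ᶜ ×ˢ tsupport φ from ⟨h.2, h.1⟩),
        Set.indicator_of_mem (show (x, y) ∈ tsupport φ ×ˢ Ω'ᶜ from h), hD]
      simp only [Prod.swap, Prod.fst, Prod.snd]
      congr 1
      rw [hks y x]; ring
    · have h1 : (x, y) ∉ tsupport φ ×ˢ Ω'ᶜ := fun hmem => h ⟨hmem.1, hmem.2⟩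
      have h2 : (Prod.swap (x, y)) ∉ Ω'ᶜ ×ˢ tsupport φ := fun hmem => h ⟨hmem.2, hmem.1⟩
      rw [Set.indicator_of_notMem h2, Set.indicator_of_notMem h1]
  have hG3 : ∫⁻ p, g3 p ∂((volume : Measure (Euc N)).prod volume) < ⊤ := by
    calc ∫⁻ p, g3 p ∂((volume : Measure (Euc N)).prod volume)
        = ∫⁻ p, g3 p.swap ∂((volume : Measure (Euc N)).prod volume) :=
          (lintegral_prod_swap g3).symm
      _ = ∫⁻ p, g2 p ∂((volume : Measure (Euc N)).prod volume) :=
          lintegral_congr hswap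
      _ < ⊤ := hG2
  refine ⟨hfm.aestronglyMeasurable, ?_⟩
  rw [hasFiniteIntegral_def]
  calc ∫⁻ p, (‖f p‖₊ : ℝ≥0∞) ∂((volume : Measure (Euc N)).prod volume)
      ≤ ∫⁻ p, (g1a p + g1b p + g2 p + g3 p)
          ∂((volume : Measure (Euc N)).prod volume) := lintegral_mono hpt
    _ = (∫⁻ p, g1a p ∂((volume : Measure (Euc N)).prod volume))
        + (∫⁻ p, g1b p ∂((volume : Measure (Euc N)).prod volume))
        + (∫⁻ p, g2 p ∂((volume : Measure (Euc N)).prod volume))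
        + (∫⁻ p, g3 p ∂((volume : Measure (Euc N)).prod volume)) := by
        rw [lintegral_add_right _ hg3m, lintegral_add_right _ hg2m,
          lintegral_add_right _ hg1bm]
    _ < ⊤ := by
        apply ENNReal.add_lt_top.2
        exact ⟨ENNReal.add_lt_top.2 ⟨ENNReal.add_lt_top.2 ⟨hG1a, hG1b⟩, hG2⟩, hG3⟩
end
end

section
/- Let σ ∈ (0,2], let k be a kernel of order σ, and let Ω ⊆ ℝ^N be open. Let φ : ℝ^N → ℝ be Lipschitz with compact support contained in Ω, and let Ω′ ⊆ Ω be open with the support of φ compactly contained in Ω′. Let u : ℝ^N → ℝ be measurable with u|_{Ω′} ∈ D^k(Ω′). Then the product φu (with u extended arbitrarily outside Ω′; only values on the support of φ matter) belongs to 𝒟^k(Ω), and there is a constant C > 0, depending only on N, k, ‖φ‖_{C^{0,1}} := sup|φ| + Lip(φ), and dist(supp φ, ℝ^N∖Ω′), such that b_k(φu) ≤ C (‖u‖²_{L²(Ω′)} + b_{k,Ω′}(u)). -/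
open MeasureTheory ENNReal Metric Set Filter

noncomputable section

private lemma cutoff_sq_ineq (a b c d : ℝ) :
    (a * b - c * d) ^ 2 ≤ 2 * a ^ 2 * (b - d) ^ 2 + 2 * d ^ 2 * (a - c) ^ 2 := by
  nlinarith [sq_nonneg (a * (b - d) - d * (a - c)), sq_nonneg (a * (b - d) + d * (a - c))]

set_option maxHeartbeats 2000000 in
/-- products with Lipschitz cutoff functions (Lemma `properties1`(5)). -/
theorem cutoff_product_estimate
    {N : ℕ} (hN : 0 < N) {σ : ℝ} (hσ0 : 0 < σ) (hσ2 : σ ≤ 2)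
    (k : Euc N → Euc N → ℝ) (hk : IsKernel N σ k)
    (Ω : Set (Euc N)) (hΩo : IsOpen Ω)
    (φ : Euc N → ℝ) (L : NNReal) (hφlip : LipschitzWith L φ) (hφc : HasCompactSupport φ)
    (Ω' : Set (Euc N)) (hΩ'o : IsOpen Ω') (hΩ'Ω : Ω' ⊆ Ω) (hsupp : tsupport φ ⊆ Ω') :
    ∃ C > (0:ℝ), ∀ u : Euc N → ℝ,
      Measurable u → MemLp u 2 (volume.restrict Ω') → quadForm k Ω' u < ⊤ →
      (MemDkZero k Ω (fun x => φ x * u x) ∧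
        quadForm k Set.univ (fun x => φ x * u x) ≤
          ENNReal.ofReal C * ((eLpNorm u 2 (volume.restrict Ω')) ^ 2 + quadForm k Ω' u)) := by
  classical
  obtain ⟨hkm, hk0, hks, Ck0, hCk0⟩ := hk
  have ms : MeasurableSet Ω' := hΩ'o.measurableSet
  set Ck : ℝ := max Ck0 0 with hCkdef
  have hCknn : (0:ℝ) ≤ Ck := le_max_right _ _
  have hCk : ∀ x, (∫⁻ y, ENNReal.ofReal (min 1 (‖x - y‖ ^ σ) * k x y)) ≤ ENNReal.ofReal Ck :=
    fun x => (hCk0 x).trans (ENNReal.ofReal_le_ofReal (le_max_left _ _))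
  obtain ⟨M0, hM0⟩ := hφc.exists_bound_of_continuous hφlip.continuous
  set M : ℝ := max M0 0 with hMdef
  have hMnn : (0:ℝ) ≤ M := le_max_right _ _
  have hM : ∀ x, |φ x| ≤ M := fun x => le_trans (by simpa using hM0 x) (le_max_left _ _)
  obtain ⟨δ, hδ0, hδ⟩ := hφc.exists_thickening_subset_open hΩ'o hsupp
  have hdist : ∀ x ∈ tsupport φ, ∀ y, y ∉ Ω' → δ ≤ ‖x - y‖ := by
    intro x hx y hy
    by_contra h
    push_neg at h
    refine hy (hδ ?_)
    rw [Metric.mem_thickening_iff]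
    exact ⟨x, hx, by rwa [dist_eq_norm, ← norm_neg, neg_sub]⟩
  set m : ℝ := min 1 (δ ^ σ) with hmdef
  have hm0 : (0:ℝ) < m := lt_min one_pos (Real.rpow_pos_of_pos hδ0 σ)
  have hminlb : ∀ x ∈ tsupport φ, ∀ y, y ∉ Ω' → m ≤ min 1 (‖x - y‖ ^ σ) := by
    intro x hx y hy
    exact min_le_min le_rfl (Real.rpow_le_rpow hδ0.le (hdist x hx y hy) hσ0.le)
  set CL : ℝ := (L:ℝ)^2 + 4*M^2 + 1 with hCLdef
  have hCLnn : (0:ℝ) ≤ CL := by positivity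
  set c3 : ℝ := M^2 / m with hc3def
  have hc3nn : (0:ℝ) ≤ c3 := div_nonneg (sq_nonneg M) hm0.le
  set C : ℝ := 4*M^2 + (2*CL + 2*c3)*Ck + 1 with hCdef
  have hCpos : (0:ℝ) < C := by
    have h1 : (0:ℝ) ≤ (2*CL + 2*c3)*Ck := mul_nonneg (by linarith) hCknn
    have h2 := sq_nonneg M
    rw [hCdef]; linarith
  have hφbound : ∀ x y : Euc N, (φ x - φ y)^2 ≤ CL * min 1 (‖x - y‖ ^ σ) := by
    intro x y
    have ht0 : (0:ℝ) ≤ ‖x - y‖ := norm_nonneg _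
    rcases le_or_gt (‖x - y‖) 1 with h1 | h1
    · have h2 : ‖x - y‖ ^ (2:ℝ) ≤ ‖x - y‖ ^ σ :=
        Real.rpow_le_rpow_of_exponent_ge' ht0 h1 hσ0.le hσ2
      have h2' : ‖x - y‖ ^ 2 ≤ ‖x - y‖ ^ σ := by
        rwa [show (2:ℝ) = ((2:ℕ):ℝ) by norm_num, Real.rpow_natCast] at h2
      have h3 : ‖x - y‖ ^ 2 ≤ min 1 (‖x - y‖ ^ σ) := le_min (by nlinarith) h2'
      have hlip : |φ x - φ y| ≤ (L:ℝ) * ‖x - y‖ := by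
        have := hφlip.dist_le_mul x y
        rwa [Real.dist_eq, dist_eq_norm] at this
      have h4 : (φ x - φ y)^2 ≤ (L:ℝ)^2 * ‖x - y‖^2 := by
        have := pow_le_pow_left₀ (abs_nonneg (φ x - φ y)) hlip 2
        rwa [sq_abs, mul_pow] at this
      have h5 : (L:ℝ)^2 * ‖x - y‖^2 ≤ (L:ℝ)^2 * min 1 (‖x - y‖ ^ σ) :=
        mul_le_mul_of_nonneg_left h3 (sq_nonneg _)
      have h6 : (L:ℝ)^2 * min 1 (‖x - y‖ ^ σ) ≤ CL * min 1 (‖x - y‖ ^ σ) := by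
        have hmn : (0:ℝ) ≤ min 1 (‖x - y‖ ^ σ) := le_min zero_le_one (Real.rpow_nonneg ht0 σ)
        have hLC : (L:ℝ)^2 ≤ CL := by rw [hCLdef]; have := sq_nonneg M; linarith
        exact mul_le_mul_of_nonneg_right hLC hmn
      linarith
    · have h2 : min 1 (‖x - y‖ ^ σ) = 1 := min_eq_left (Real.one_le_rpow h1.le hσ0.le)
      rw [h2, mul_one]
      obtain ⟨hx1, hx2⟩ := abs_le.1 (hM x)
      obtain ⟨hy1, hy2⟩ := abs_le.1 (hM y)
      have h2M : (φ x - φ y)^2 ≤ (2*M)^2 := sq_le_sq' (by linarith) (by linarith)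
      have h2M' : (2*M)^2 = 4*M^2 := by ring
      have hL2 := sq_nonneg ((L:ℝ))
      rw [hCLdef]; linarith
  refine ⟨C, hCpos, ?_⟩
  intro u hu hu2 hub
  set v : Euc N → ℝ := fun x => φ x * u x with hvdef
  have hvm : Measurable v := hφlip.continuous.measurable.mul hu
  have hvz : ∀ x, x ∉ Ω' → v x = 0 := by
    intro x hx
    have hφ0 : φ x = 0 := image_eq_zero_of_notMem_tsupport (fun h => hx (hsupp h))
    simp [hvdef, hφ0]
  have hvL2 : MemLp v 2 (volume : Measure (Euc N)) := by
    have h1 : MemLp (Ω'.indicator u) 2 (volume : Measure (Euc N)) :=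
      (memLp_indicator_iff_restrict ms).2 hu2
    have h2 := h1.const_mul M
    refine MemLp.of_le h2 hvm.aestronglyMeasurable (ae_of_all _ fun x => ?_)
    by_cases hx : x ∈ Ω'
    · simp only [Set.indicator_of_mem hx, Real.norm_eq_abs, hvdef]
      rw [abs_mul, abs_mul, abs_of_nonneg hMnn]
      exact mul_le_mul_of_nonneg_right (hM x) (abs_nonneg _)
    · simp [hvz x hx, Set.indicator_of_notMem hx]
  set F : Euc N → Euc N → ℝ≥0∞ := fun x y => ENNReal.ofReal ((v x - v y)^2 * k x y) with hFdef
  set g : Euc N → Euc N → ℝ≥0∞ := fun x y => ENNReal.ofReal (min 1 (‖x - y‖ ^ σ) * k x y)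
    with hgdef
  set A : Euc N → Euc N → ℝ≥0∞ := fun x y => ENNReal.ofReal ((u x - u y)^2 * k x y) with hAdef
  have hgsymm : ∀ x y, g x y = g y x := by
    intro x y
    simp only [hgdef]
    rw [hks, ← norm_neg, neg_sub]
  have hgy : ∀ y, (∫⁻ x, g x y) ≤ ENNReal.ofReal Ck := by
    intro y
    calc (∫⁻ x, g x y) = ∫⁻ x, g y x := by simp_rw [fun x => hgsymm x y]
    _ ≤ ENNReal.ofReal Ck := hCk y
  have hFm : Measurable (fun p : Euc N × Euc N => F p.1 p.2) := by
    apply ENNReal.measurable_ofReal.comp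
    exact (((hvm.comp measurable_fst).sub (hvm.comp measurable_snd)).pow_const 2).mul hkm
  have hgm : Measurable (fun p : Euc N × Euc N => g p.1 p.2) := by
    apply ENNReal.measurable_ofReal.comp
    refine Measurable.mul ?_ hkm
    exact measurable_const.min ((Real.continuous_rpow_const hσ0.le).measurable.comp
      (measurable_norm.comp (measurable_fst.sub measurable_snd)))
  have hAm : Measurable (fun p : Euc N × Euc N => A p.1 p.2) := by
    apply ENNReal.measurable_ofReal.comp
    exact (((hu.comp measurable_fst).sub (hu.comp measurable_snd)).pow_const 2).mul hkm
  have hu2m : Measurable (fun x => ENNReal.ofReal (u x ^ 2)) :=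
    ENNReal.measurable_ofReal.comp (hu.pow_const 2)
  set SN : ℝ≥0∞ := ∫⁻ x in Ω', ENNReal.ofReal (u x ^ 2) with hSNdef
  have hSN : SN = eLpNorm u 2 (volume.restrict Ω') ^ 2 := by
    rw [eLpNorm_eq_lintegral_rpow_enorm_toReal two_ne_zero ENNReal.ofNat_ne_top]
    rw [← ENNReal.rpow_natCast _ 2, ← ENNReal.rpow_mul]
    norm_num
    rw [hSNdef]
    apply lintegral_congr
    intro x
    rw [← sq_abs (u x), ← Real.norm_eq_abs, ENNReal.ofReal_pow (norm_nonneg _),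
      ofReal_norm_eq_enorm]
  have hSNfin : SN < ⊤ := by
    rw [hSN]
    exact ENNReal.pow_lt_top hu2.2
  have hbd1 : ∀ x y, F x y ≤ ENNReal.ofReal (2*M^2) * A x y
      + ENNReal.ofReal (2*CL) * (ENNReal.ofReal (u y ^ 2) * g x y) := by
    intro x y
    have hk' := hk0 x y
    have hineq : (v x - v y)^2 * k x y ≤
        (2*M^2) * ((u x - u y)^2 * k x y) + (2*CL) * (u y ^ 2 * (min 1 (‖x - y‖ ^ σ) * k x y)) := by
      have h1 : (v x - v y)^2 ≤ 2 * (φ x)^2 * (u x - u y)^2 + 2 * (u y)^2 * (φ x - φ y)^2 := by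
        simpa [hvdef] using cutoff_sq_ineq (φ x) (u x) (φ y) (u y)
      have h2 : (φ x)^2 ≤ M^2 := by
        obtain ⟨ha, hb⟩ := abs_le.1 (hM x)
        exact sq_le_sq' (by linarith) hb
      have h3 := hφbound x y
      have t1 : (v x - v y)^2 * k x y ≤
          (2 * (φ x)^2 * (u x - u y)^2 + 2 * (u y)^2 * (φ x - φ y)^2) * k x y :=
        mul_le_mul_of_nonneg_right h1 hk'
      have t2 : (φ x)^2 * (u x - u y)^2 * k x y ≤ M^2 * (u x - u y)^2 * k x y :=
        mul_le_mul_of_nonneg_right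
          (mul_le_mul_of_nonneg_right h2 (sq_nonneg _)) hk'
      have t3 : (u y)^2 * (φ x - φ y)^2 * k x y
          ≤ (u y)^2 * (CL * min 1 (‖x - y‖ ^ σ)) * k x y :=
        mul_le_mul_of_nonneg_right (mul_le_mul_of_nonneg_left h3 (sq_nonneg _)) hk'
      linarith [t1, t2, t3]
    calc F x y ≤ ENNReal.ofReal ((2*M^2) * ((u x - u y)^2 * k x y)
          + (2*CL) * (u y ^ 2 * (min 1 (‖x - y‖ ^ σ) * k x y))) :=
        ENNReal.ofReal_le_ofReal hineq
    _ ≤ ENNReal.ofReal ((2*M^2) * ((u x - u y)^2 * k x y))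
          + ENNReal.ofReal ((2*CL) * (u y ^ 2 * (min 1 (‖x - y‖ ^ σ) * k x y))) :=
        ENNReal.ofReal_add_le
    _ = ENNReal.ofReal (2*M^2) * A x y
          + ENNReal.ofReal (2*CL) * (ENNReal.ofReal (u y ^ 2) * g x y) := by
        rw [ENNReal.ofReal_mul (p := 2*M^2) (by positivity),
          ENNReal.ofReal_mul (p := 2*CL) (by linarith [hCLnn]),
          ENNReal.ofReal_mul (p := u y ^ 2) (sq_nonneg (u y))]
  have hbd2 : ∀ x, ∀ y, y ∉ Ω' →
      F x y ≤ ENNReal.ofReal c3 * (ENNReal.ofReal (u x ^ 2) * g x y) := by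
    intro x y hy
    have hvy : v y = 0 := hvz y hy
    by_cases hx : x ∈ tsupport φ
    · have hk' := hk0 x y
      have hineq : (v x - v y)^2 * k x y ≤ c3 * (u x ^ 2 * (min 1 (‖x - y‖ ^ σ) * k x y)) := by
        have h2 : (φ x)^2 ≤ M^2 := by
          obtain ⟨ha, hb⟩ := abs_le.1 (hM x)
          exact sq_le_sq' (by linarith) hb
        have h3 := hminlb x hx y hy
        have hvx : (v x)^2 ≤ M^2 * u x ^ 2 := by
          have hvv : (v x)^2 = (φ x)^2 * (u x)^2 := by rw [hvdef]; ring
          rw [hvv]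
          exact mul_le_mul_of_nonneg_right h2 (sq_nonneg _)
        rw [hvy, sub_zero, hc3def, div_mul_eq_mul_div, le_div_iff₀ hm0]
        calc (v x)^2 * k x y * m ≤ M^2 * u x ^2 * k x y * min 1 (‖x - y‖ ^ σ) := by
              have hkk : (0:ℝ) ≤ (v x)^2 * k x y := mul_nonneg (sq_nonneg _) hk'
              have h5 : (v x)^2 * k x y ≤ M^2 * u x^2 * k x y :=
                mul_le_mul_of_nonneg_right hvx hk'
              have h6 : (v x)^2 * k x y * m ≤ (v x)^2 * k x y * min 1 (‖x - y‖ ^ σ) :=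
                mul_le_mul_of_nonneg_left h3 hkk
              have h7 : (v x)^2 * k x y * min 1 (‖x - y‖ ^ σ)
                  ≤ M^2 * u x^2 * k x y * min 1 (‖x - y‖ ^ σ) :=
                mul_le_mul_of_nonneg_right h5
                  (le_min zero_le_one (Real.rpow_nonneg (norm_nonneg _) σ))
              linarith
        _ = M^2 * (u x ^ 2 * (min 1 (‖x - y‖ ^ σ) * k x y)) := by ring
      calc F x y ≤ ENNReal.ofReal (c3 * (u x ^ 2 * (min 1 (‖x - y‖ ^ σ) * k x y))) :=
          ENNReal.ofReal_le_ofReal hineq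
      _ = ENNReal.ofReal c3 * (ENNReal.ofReal (u x ^ 2) * g x y) := by
          rw [ENNReal.ofReal_mul hc3nn, ENNReal.ofReal_mul (sq_nonneg (u x))]
    · have hvx : v x = 0 := by
        have hφ0 : φ x = 0 := image_eq_zero_of_notMem_tsupport hx
        simp [hvdef, hφ0]
      simp only [hFdef, hvx, hvy, sub_zero]
      simp
  have hsplit : (∫⁻ x, ∫⁻ y, F x y) =
      ((∫⁻ x in Ω', ∫⁻ y in Ω', F x y) + (∫⁻ x in Ω', ∫⁻ y in Ω'ᶜ, F x y))
      + ((∫⁻ x in Ω'ᶜ, ∫⁻ y in Ω', F x y) + (∫⁻ x in Ω'ᶜ, ∫⁻ y in Ω'ᶜ, F x y)) := by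
    have h1 : ∀ x, (∫⁻ y, F x y) = (∫⁻ y in Ω', F x y) + (∫⁻ y in Ω'ᶜ, F x y) :=
      fun x => (lintegral_add_compl _ ms).symm
    have hm1 : Measurable fun x => ∫⁻ y in Ω', F x y :=
      Measurable.lintegral_prod_right' (f := fun p : Euc N × Euc N => F p.1 p.2) hFm
    calc (∫⁻ x, ∫⁻ y, F x y)
        = (∫⁻ x in Ω', ∫⁻ y, F x y) + (∫⁻ x in Ω'ᶜ, ∫⁻ y, F x y) :=
          (lintegral_add_compl _ ms).symm
    _ = _ := by
          rw [lintegral_congr h1, lintegral_congr h1,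
            lintegral_add_left hm1, lintegral_add_left hm1]
  have p4 : (∫⁻ x in Ω'ᶜ, ∫⁻ y in Ω'ᶜ, F x y) = 0 := by
    have hz : ∀ x ∈ Ω'ᶜ, (∫⁻ y in Ω'ᶜ, F x y) = 0 := by
      intro x hx
      have hz2 : ∀ y ∈ Ω'ᶜ, F x y = (fun _ => (0:ℝ≥0∞)) y := by
        intro y hy
        simp [hFdef, hvz x hx, hvz y hy]
      calc (∫⁻ y in Ω'ᶜ, F x y) = ∫⁻ _ in Ω'ᶜ, (0:ℝ≥0∞) :=
          setLIntegral_congr_fun ms.compl hz2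
      _ = 0 := lintegral_zero
    calc (∫⁻ x in Ω'ᶜ, ∫⁻ y in Ω'ᶜ, F x y) = ∫⁻ _ in Ω'ᶜ, (0:ℝ≥0∞) :=
        setLIntegral_congr_fun ms.compl hz
    _ = 0 := lintegral_zero
  have p2 : (∫⁻ x in Ω', ∫⁻ y in Ω'ᶜ, F x y) ≤ ENNReal.ofReal c3 * ENNReal.ofReal Ck * SN := by
    have hinner : ∀ x, (∫⁻ y in Ω'ᶜ, F x y)
        ≤ ENNReal.ofReal c3 * ENNReal.ofReal Ck * ENNReal.ofReal (u x ^ 2) := by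
      intro x
      calc (∫⁻ y in Ω'ᶜ, F x y)
          ≤ ∫⁻ y in Ω'ᶜ, ENNReal.ofReal c3 * ENNReal.ofReal (u x ^ 2) * g x y := by
            refine setLIntegral_mono' ms.compl (fun y hy => ?_)
            rw [mul_assoc]
            exact hbd2 x y hy
      _ = ENNReal.ofReal c3 * ENNReal.ofReal (u x ^ 2) * ∫⁻ y in Ω'ᶜ, g x y :=
            lintegral_const_mul' _ _ (by finiteness)
      _ ≤ ENNReal.ofReal c3 * ENNReal.ofReal (u x ^ 2) * ENNReal.ofReal Ck :=
            mul_le_mul_right ((setLIntegral_le_lintegral _ _).trans (hCk x)) _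
      _ = ENNReal.ofReal c3 * ENNReal.ofReal Ck * ENNReal.ofReal (u x ^ 2) := by ring
    calc (∫⁻ x in Ω', ∫⁻ y in Ω'ᶜ, F x y)
        ≤ ∫⁻ x in Ω', ENNReal.ofReal c3 * ENNReal.ofReal Ck * ENNReal.ofReal (u x ^ 2) :=
          lintegral_mono hinner
    _ = ENNReal.ofReal c3 * ENNReal.ofReal Ck * SN :=
          lintegral_const_mul' _ _ (by finiteness)
  have p3 : (∫⁻ x in Ω'ᶜ, ∫⁻ y in Ω', F x y) ≤ ENNReal.ofReal c3 * ENNReal.ofReal Ck * SN := by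
    rw [lintegral_lintegral_swap hFm.aemeasurable]
    have hinner : ∀ y ∈ Ω', (∫⁻ x in Ω'ᶜ, F x y)
        ≤ ENNReal.ofReal c3 * ENNReal.ofReal Ck * ENNReal.ofReal (u y ^ 2) := by
      intro y _
      calc (∫⁻ x in Ω'ᶜ, F x y)
          ≤ ∫⁻ x in Ω'ᶜ, ENNReal.ofReal c3 * ENNReal.ofReal (u y ^ 2) * g x y := by
            refine setLIntegral_mono' ms.compl (fun x hx => ?_)
            have hsF : F x y = F y x := by
              simp only [hFdef]
              rw [hks]
              congr 1
              ring
            rw [hsF, mul_assoc, hgsymm x y]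
            exact hbd2 y x hx
      _ = ENNReal.ofReal c3 * ENNReal.ofReal (u y ^ 2) * ∫⁻ x in Ω'ᶜ, g x y :=
            lintegral_const_mul' _ _ (by finiteness)
      _ ≤ ENNReal.ofReal c3 * ENNReal.ofReal (u y ^ 2) * ENNReal.ofReal Ck :=
            mul_le_mul_right ((setLIntegral_le_lintegral _ _).trans (hgy y)) _
      _ = ENNReal.ofReal c3 * ENNReal.ofReal Ck * ENNReal.ofReal (u y ^ 2) := by ring
    calc (∫⁻ y in Ω', ∫⁻ x in Ω'ᶜ, F x y)
        ≤ ∫⁻ y in Ω', ENNReal.ofReal c3 * ENNReal.ofReal Ck * ENNReal.ofReal (u y ^ 2) :=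
          setLIntegral_mono' ms hinner
    _ = ENNReal.ofReal c3 * ENNReal.ofReal Ck * SN :=
          lintegral_const_mul' _ _ (by finiteness)
  have p1 : (∫⁻ x in Ω', ∫⁻ y in Ω', F x y)
      ≤ ENNReal.ofReal (2*M^2) * (∫⁻ x in Ω', ∫⁻ y in Ω', A x y)
        + ENNReal.ofReal (2*CL) * ENNReal.ofReal Ck * SN := by
    set B : Euc N → Euc N → ℝ≥0∞ :=
      fun x y => ENNReal.ofReal (u y ^ 2) * g x y with hBdef
    have hBm : Measurable (fun p : Euc N × Euc N => B p.1 p.2) :=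
      (hu2m.comp measurable_snd).mul hgm
    have hm1 : Measurable fun x => ∫⁻ y in Ω', A x y :=
      Measurable.lintegral_prod_right' (f := fun p : Euc N × Euc N => A p.1 p.2) hAm
    have hAx : ∀ x, Measurable fun y => A x y := fun x => hAm.comp measurable_prodMk_left
    have step1 : (∫⁻ x in Ω', ∫⁻ y in Ω', F x y)
        ≤ ENNReal.ofReal (2*M^2) * (∫⁻ x in Ω', ∫⁻ y in Ω', A x y)
          + ENNReal.ofReal (2*CL) * (∫⁻ x in Ω', ∫⁻ y in Ω', B x y) := by
      calc (∫⁻ x in Ω', ∫⁻ y in Ω', F x y)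
          ≤ ∫⁻ x in Ω', ∫⁻ y in Ω',
              (ENNReal.ofReal (2*M^2) * A x y + ENNReal.ofReal (2*CL) * B x y) :=
            lintegral_mono fun x => lintegral_mono fun y => hbd1 x y
      _ = ∫⁻ x in Ω', (ENNReal.ofReal (2*M^2) * ∫⁻ y in Ω', A x y)
              + ENNReal.ofReal (2*CL) * ∫⁻ y in Ω', B x y := by
            refine lintegral_congr fun x => ?_
            rw [lintegral_add_left ((hAx x).const_mul _),
              lintegral_const_mul' _ _ ENNReal.ofReal_ne_top,
              lintegral_const_mul' _ _ ENNReal.ofReal_ne_top]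
      _ = _ := by
            rw [lintegral_add_left (hm1.const_mul _),
              lintegral_const_mul' _ _ ENNReal.ofReal_ne_top,
              lintegral_const_mul' _ _ ENNReal.ofReal_ne_top]
    have step2 : (∫⁻ x in Ω', ∫⁻ y in Ω', B x y) ≤ ENNReal.ofReal Ck * SN := by
      rw [lintegral_lintegral_swap hBm.aemeasurable]
      calc (∫⁻ y in Ω', ∫⁻ x in Ω', B x y)
          = ∫⁻ y in Ω', ENNReal.ofReal (u y ^ 2) * ∫⁻ x in Ω', g x y :=
            lintegral_congr fun y => lintegral_const_mul' _ _ ENNReal.ofReal_ne_top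
      _ ≤ ∫⁻ y in Ω', ENNReal.ofReal (u y ^ 2) * ENNReal.ofReal Ck :=
            lintegral_mono fun y =>
              mul_le_mul_right ((setLIntegral_le_lintegral _ _).trans (hgy y)) _
      _ = ENNReal.ofReal Ck * SN := by
            rw [hSNdef, ← lintegral_const_mul' _ _ (ENNReal.ofReal_ne_top (r := Ck))]
            exact lintegral_congr fun y => mul_comm _ _
    calc (∫⁻ x in Ω', ∫⁻ y in Ω', F x y)
        ≤ ENNReal.ofReal (2*M^2) * (∫⁻ x in Ω', ∫⁻ y in Ω', A x y)
          + ENNReal.ofReal (2*CL) * (∫⁻ x in Ω', ∫⁻ y in Ω', B x y) := step1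
    _ ≤ ENNReal.ofReal (2*M^2) * (∫⁻ x in Ω', ∫⁻ y in Ω', A x y)
          + ENNReal.ofReal (2*CL) * (ENNReal.ofReal Ck * SN) :=
        add_le_add le_rfl (mul_le_mul_right step2 _)
    _ = _ := by rw [mul_assoc]
  have hAq : (∫⁻ x in Ω', ∫⁻ y in Ω', A x y) = 2 * quadForm k Ω' u := by
    rw [quadForm, ← mul_assoc]
    have h2 : (2:ℝ≥0∞) * (1/2) = 1 := by
      rw [one_div]
      exact ENNReal.mul_inv_cancel two_ne_zero ENNReal.ofNat_ne_top
    rw [h2, one_mul]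
  have total : (∫⁻ x, ∫⁻ y, F x y)
      ≤ ENNReal.ofReal C * SN + ENNReal.ofReal C * quadForm k Ω' u := by
    rw [hsplit, p4, add_zero]
    have e1 : ENNReal.ofReal (2*M^2) * (∫⁻ x in Ω', ∫⁻ y in Ω', A x y)
        ≤ ENNReal.ofReal C * quadForm k Ω' u := by
      rw [hAq, ← mul_assoc]
      refine mul_le_mul_left ?_ _
      calc ENNReal.ofReal (2*M^2) * 2 = ENNReal.ofReal (2*M^2) * ENNReal.ofReal 2 := by
            rw [ENNReal.ofReal_ofNat]
      _ = ENNReal.ofReal ((2*M^2) * 2) := (ENNReal.ofReal_mul (by positivity)).symm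
      _ ≤ ENNReal.ofReal C := by
            refine ENNReal.ofReal_le_ofReal ?_
            have h1 : (0:ℝ) ≤ (2*CL + 2*c3)*Ck := mul_nonneg (by linarith) hCknn
            rw [hCdef]; linarith
    have e2 : ENNReal.ofReal (2*CL) * ENNReal.ofReal Ck * SN
          + (ENNReal.ofReal c3 * ENNReal.ofReal Ck * SN
            + ENNReal.ofReal c3 * ENNReal.ofReal Ck * SN)
        ≤ ENNReal.ofReal C * SN := by
      have coef : ENNReal.ofReal (2*CL*Ck) + ENNReal.ofReal (c3*Ck) + ENNReal.ofReal (c3*Ck)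
          ≤ ENNReal.ofReal C := by
        rw [← ENNReal.ofReal_add (mul_nonneg (by linarith [hCLnn]) hCknn)
            (mul_nonneg hc3nn hCknn),
          ← ENNReal.ofReal_add
            (add_nonneg (mul_nonneg (by linarith [hCLnn]) hCknn) (mul_nonneg hc3nn hCknn))
            (mul_nonneg hc3nn hCknn)]
        refine ENNReal.ofReal_le_ofReal ?_
        have h4 : (0:ℝ) ≤ 4*M^2 := by positivity
        rw [hCdef]; nlinarith
      calc ENNReal.ofReal (2*CL) * ENNReal.ofReal Ck * SN
            + (ENNReal.ofReal c3 * ENNReal.ofReal Ck * SN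
              + ENNReal.ofReal c3 * ENNReal.ofReal Ck * SN)
          = (ENNReal.ofReal (2*CL) * ENNReal.ofReal Ck
              + ENNReal.ofReal c3 * ENNReal.ofReal Ck
              + ENNReal.ofReal c3 * ENNReal.ofReal Ck) * SN := by ring
      _ = (ENNReal.ofReal (2*CL*Ck) + ENNReal.ofReal (c3*Ck) + ENNReal.ofReal (c3*Ck)) * SN := by
            rw [← ENNReal.ofReal_mul (p := 2*CL) (by linarith [hCLnn]),
              ← ENNReal.ofReal_mul (p := c3) hc3nn]
      _ ≤ ENNReal.ofReal C * SN := mul_le_mul_left coef _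
    calc (∫⁻ x in Ω', ∫⁻ y in Ω', F x y) + (∫⁻ x in Ω', ∫⁻ y in Ω'ᶜ, F x y)
          + (∫⁻ x in Ω'ᶜ, ∫⁻ y in Ω', F x y)
        ≤ (ENNReal.ofReal (2*M^2) * (∫⁻ x in Ω', ∫⁻ y in Ω', A x y)
            + ENNReal.ofReal (2*CL) * ENNReal.ofReal Ck * SN
            + ENNReal.ofReal c3 * ENNReal.ofReal Ck * SN)
          + ENNReal.ofReal c3 * ENNReal.ofReal Ck * SN :=
          add_le_add (add_le_add p1 p2) p3
    _ ≤ ENNReal.ofReal C * quadForm k Ω' u + ENNReal.ofReal C * SN := by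
          calc ENNReal.ofReal (2*M^2) * (∫⁻ x in Ω', ∫⁻ y in Ω', A x y)
              + ENNReal.ofReal (2*CL) * ENNReal.ofReal Ck * SN
              + ENNReal.ofReal c3 * ENNReal.ofReal Ck * SN
              + ENNReal.ofReal c3 * ENNReal.ofReal Ck * SN
              = ENNReal.ofReal (2*M^2) * (∫⁻ x in Ω', ∫⁻ y in Ω', A x y)
                + (ENNReal.ofReal (2*CL) * ENNReal.ofReal Ck * SN
                  + (ENNReal.ofReal c3 * ENNReal.ofReal Ck * SN
                    + ENNReal.ofReal c3 * ENNReal.ofReal Ck * SN)) := by ring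
          _ ≤ ENNReal.ofReal C * quadForm k Ω' u + ENNReal.ofReal C * SN :=
              add_le_add e1 e2
    _ = ENNReal.ofReal C * SN + ENNReal.ofReal C * quadForm k Ω' u := by ring
  have hqv : quadForm k Set.univ v = (1/2) * ∫⁻ x, ∫⁻ y, F x y := by
    rw [quadForm, Measure.restrict_univ]
  have main : quadForm k Set.univ v
      ≤ ENNReal.ofReal C * (eLpNorm u 2 (volume.restrict Ω') ^ 2 + quadForm k Ω' u) := by
    rw [hqv, mul_add, ← hSN]
    calc (1/2 : ℝ≥0∞) * ∫⁻ x, ∫⁻ y, F x y ≤ 1 * ∫⁻ x, ∫⁻ y, F x y :=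
          mul_le_mul_left (by norm_num) _
    _ = ∫⁻ x, ∫⁻ y, F x y := one_mul _
    _ ≤ _ := total
  refine ⟨⟨hvm, hvL2, ?_, ae_of_all _ fun x hx => hvz x fun h => hx (hΩ'Ω h)⟩, main⟩
  refine lt_of_le_of_lt main ?_
  have hq2 : eLpNorm u 2 (volume.restrict Ω') ^ 2 < ⊤ := by rw [← hSN]; exact hSNfin
  exact ENNReal.mul_lt_top ENNReal.ofReal_lt_top (ENNReal.add_lt_top.2 ⟨hq2, hub⟩)
end
end
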